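/- arXiv:1106.5915 — 2 statements merged into one kernel-verified Lean document; each statement's English description precedes it below -/
import Mathlib

section
/- Identification of the pre-jump limit law (Proposition 4.1). Assume E e^{αX_1}<1 for some α>0. Let Z̃ be a D-valued random element with law given by the path marginal μ(dw) of the probability measure μ, and set τ_{Z̃}=inf{t>0: Z̃_t=Δ}. Then the killed path {Z̃_t : t<τ_{Z̃}} has the same distribution as {Z_t : t<ρ}, where Z is the Esscher transform of X and ρ is an independent exponential random variable with parameter c₁. -/
open MeasureTheory ProbabilityTheory Filter Set Real
open scoped ENNReal NNReal

noncomputable section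

namespace GriffinMaller

/-! ### Convolution equivalent distributions -/

/-- Convolution of two measures on `ℝ`. -/
def mconv (m₁ m₂ : Measure ℝ) : Measure ℝ :=
  (m₁.prod m₂).map fun p => p.1 + p.2

/-- The (real-valued) tail of a measure on `ℝ`. -/
def mtail (m : Measure ℝ) (u : ℝ) : ℝ := (m (Set.Ioi u)).toReal

/-- A probability distribution on `[0,∞)` belongs to the convolution equivalent class
`S^(α)`: its tail is everywhere positive, `F̄(u+x)/F̄(u) → e^{-αx}` and
`F̄^{2*}(u)/F̄(u)` converges to a finite limit as `u → ∞`. -/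
def IsConvEquiv (α : ℝ) (m : Measure ℝ) : Prop :=
  IsProbabilityMeasure m ∧ m (Set.Iio 0) = 0 ∧ (∀ u : ℝ, 0 < mtail m u) ∧
    (∀ x : ℝ, Tendsto (fun u => mtail m (u + x) / mtail m u) atTop
      (nhds (Real.exp (-α * x)))) ∧
    ∃ L : ℝ, Tendsto (fun u => mtail (mconv m m) u / mtail m u) atTop (nhds L)

/-- A nonnegative tail function `T` (e.g. the tail of a Lévy measure) is in `S^(α)`:
it is tail equivalent to a convolution equivalent probability distribution on `[0,∞)`.
(The class `S^(α)` is closed under tail equivalence.) -/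
def TailInSalpha (α : ℝ) (T : ℝ → ℝ) : Prop :=
  ∃ m : Measure ℝ, IsConvEquiv α m ∧
    ∃ c : ℝ, 0 < c ∧ Tendsto (fun u => T u / mtail m u) atTop (nhds c)

/-! ### Path functionals -/

/-- The path of the process at a sample point. -/
def path {Ω : Type*} (X : ℝ → Ω → ℝ) (ω : Ω) : ℝ → ℝ := fun t => X t ω

/-- Càdlàg on `[0,∞)`: right continuous with left limits. -/
def Cadlag (w : ℝ → ℝ) : Prop :=
  (∀ t : ℝ, 0 ≤ t → ContinuousWithinAt w (Set.Ici t) t) ∧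
    ∀ t : ℝ, 0 < t → ∃ l : ℝ, Tendsto w (nhdsWithin t (Set.Iio t)) (nhds l)

/-- Running supremum `w̄_t = sup_{0 ≤ s ≤ t} w_s`. -/
def runSup (w : ℝ → ℝ) (t : ℝ) : ℝ := sSup (w '' Set.Icc 0 t)

/-- Supremum `w̄_{t-}` over `[0,t)` (with the convention `w̄_{0-} = w_0`). -/
def preSup (w : ℝ → ℝ) (t : ℝ) : ℝ := sSup (w '' insert 0 (Set.Ico 0 t))

/-- The left limit `w_{t-}` (with the convention `w_{0-} = w_0`). -/
def preVal (w : ℝ → ℝ) (t : ℝ) : ℝ := if 0 < t then Function.leftLim w t else w 0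

/-- `G_{t-}`, the last time on `[0,t)` at which the path attains its running maximum
(with the convention `G_{0-} = 0`). -/
def lastMaxPre (w : ℝ → ℝ) (t : ℝ) : ℝ := sSup {s | 0 ≤ s ∧ s < t ∧ w s = runSup w s}

/-- First passage time of a path strictly above the level `0`. -/
def tauP (w : ℝ → ℝ) : ℝ := sInf {t | 0 ≤ t ∧ 0 < w t}

/-! ### Lévy processes -/

variable {Ω : Type*} [MeasurableSpace Ω]

/-- `X` is a Lévy process under the probability measure `P`: it starts at `0`, has
a.s. càdlàg paths and stationary, (mutually) independent increments. -/
structure IsLevy (P : Measure Ω) (X : ℝ → Ω → ℝ) : Prop where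
  isProb : IsProbabilityMeasure P
  meas : ∀ t, Measurable (X t)
  negTimes : ∀ t : ℝ, t ≤ 0 → ∀ ω, X t ω = X 0 ω
  init : ∀ᵐ ω ∂P, X 0 ω = 0
  cadlag : ∀ᵐ ω ∂P, Cadlag (path X ω)
  stationary : ∀ s t : ℝ, 0 ≤ s → 0 ≤ t →
    Measure.map (fun ω => X (s + t) ω - X s ω) P = Measure.map (X t) P
  indepIncr : ∀ (n : ℕ) (a : ℕ → ℝ), (∀ i, 0 ≤ a i) → Monotone a →
    iIndepFun (fun (i : Fin n) ω => X (a (i.1 + 1)) ω - X (a i.1) ω) P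

/-- `X` is not the negative of a subordinator. -/
def NotNegSubordinator (P : Measure Ω) (X : ℝ → Ω → ℝ) : Prop :=
  ¬ ∀ᵐ ω ∂P, ∀ s t : ℝ, 0 ≤ s → s ≤ t → X t ω ≤ X s ω

/-- Expected number of jumps of size `> x` during the time interval `(0,1]`; for
`x > 0` this is the tail `Π̄⁺_X(x)` of the Lévy measure of `X`. -/
def jumpTailE (P : Measure Ω) (X : ℝ → Ω → ℝ) (x : ℝ) : ℝ≥0∞ :=
  ∫⁻ ω, Measure.count {t : ℝ | t ∈ Set.Ioc (0:ℝ) 1 ∧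
    x < X t ω - Function.leftLim (path X ω) t} ∂P

/-- The tail `Π̄⁺_X` of the Lévy measure, as a real-valued function. -/
def jumpTail (P : Measure Ω) (X : ℝ → Ω → ℝ) (x : ℝ) : ℝ := (jumpTailE P X x).toReal

/-- `ν` is (the restriction to `(0,∞)` of) the Lévy measure of `X`. -/
def IsPosLevyMeasure (P : Measure Ω) (X : ℝ → Ω → ℝ) (ν : Measure ℝ) : Prop :=
  ν (Set.Iic 0) = 0 ∧ ∀ x : ℝ, 0 < x → ν (Set.Ioi x) = jumpTailE P X x

/-! ### Ruin quantities -/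

/-- Ruin event `{τ(u) < ∞}`. -/
def ruinSet (X : ℝ → Ω → ℝ) (u : ℝ) : Set Ω := {ω | ∃ t, 0 ≤ t ∧ u < X t ω}

/-- Ruin time `τ(u) = inf{t ≥ 0 : X_t > u}` (junk value on `{τ(u) = ∞}`). -/
def tauT (X : ℝ → Ω → ℝ) (u : ℝ) (ω : Ω) : ℝ := sInf {t | 0 ≤ t ∧ u < X t ω}

/-- The conditional probability measure `P^{(u)} = P(· | τ(u) < ∞)`. -/
def condRuin (P : Measure Ω) (X : ℝ → Ω → ℝ) (u : ℝ) : Measure Ω :=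
  ProbabilityTheory.cond P (ruinSet X u)

/-- The event `{τ(0) < ∞}` for the process started at `z`. -/
def shiftRuin (X : ℝ → Ω → ℝ) (z : ℝ) : Set Ω := {ω | ∃ s, 0 ≤ s ∧ 0 < z + X s ω}

/-- The constant `c₁ = -log E e^{α X_1}`. -/
def c1 (P : Measure Ω) (X : ℝ → Ω → ℝ) (α : ℝ) : ℝ :=
  -Real.log (∫ ω, Real.exp (α * X 1 ω) ∂P)

/-- The constant `c₂ = (1 + α ∫_0^∞ e^{α z} P(τ(z) < ∞) dz)⁻¹`. -/
def c2 (P : Measure Ω) (X : ℝ → Ω → ℝ) (α : ℝ) : ℝ :=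
  (1 + α * ∫ z in Set.Ioi (0:ℝ), Real.exp (α * z) * (P (ruinSet X z)).toReal)⁻¹

/-- The standing assumption: `X` is a Lévy process, not the negative of a subordinator,
`Π̄⁺_X ∈ S^(α)` and `E e^{α X_1} < 1` for some `α > 0`. -/
structure Standing (P : Measure Ω) (X : ℝ → Ω → ℝ) (α : ℝ) : Prop where
  levy : IsLevy P X
  notNegSub : NotNegSubordinator P X
  posAlpha : 0 < α
  tailS : TailInSalpha α (jumpTail P X)
  expInt : Integrable (fun ω => Real.exp (α * X 1 ω)) P
  expLT : ∫ ω, Real.exp (α * X 1 ω) ∂P < 1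

/-! ### Killed paths: the Skorohod space with cemetery state

Here `EReal` serves as `ℝ ∪ {Δ}`, with `⊥` playing the role of the cemetery `Δ`. -/

/-- The path `w` killed at time `r`. -/
def kill (w : ℝ → ℝ) (r : ℝ) : ℝ → EReal := fun t => if t < r then (w t : EReal) else ⊥

/-- A real path viewed as a never-killed path in the extended state space. -/
def alive (w : ℝ → ℝ) : ℝ → EReal := fun t => (w t : EReal)

/-- Death time `τ_Δ` of a killed path. -/
def deathTime (v : ℝ → EReal) : ℝ := sInf {t | 0 < t ∧ v t = ⊥}

/-- The value `w_{τ_Δ(w)-}` of a killed path immediately prior to its death time. -/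
def preDeath (v : ℝ → EReal) : ℝ :=
  Function.leftLim (fun t => (v t).toReal) (deathTime v)

/-- `G(w,z) = E_z[H(w,X); τ(0) < ∞]`. -/
def GFun (P : Measure Ω) (X : ℝ → Ω → ℝ)
    (H : (ℝ → EReal) → (ℝ → EReal) → ℝ) (v : ℝ → EReal) (z : ℝ) : ℝ :=
  ∫ ω in shiftRuin X z, H v (alive fun t => z + X t ω) ∂P

/-- The class `𝓗` of functionals `H` on pairs of killed paths: product measurable,
satisfying the growth condition (f1) (note `e^{θ w⁻ 1(w⁻ ≤ 0)} = e^{θ min(w⁻,0)}`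
where `w⁻ = w_{τ_Δ(w)-}`), and the a.e. continuity condition (f2) on
`G(w,z) = E_z[H(w,X); τ(0) < ∞]`. -/
structure MemH (P : Measure Ω) (X : ℝ → Ω → ℝ) (α : ℝ)
    (H : (ℝ → EReal) → (ℝ → EReal) → ℝ) : Prop where
  meas : Measurable (Function.uncurry H)
  f1 : ∃ θ : ℝ, 0 ≤ θ ∧ θ < α ∧ ∃ C : ℝ, ∀ v v' : ℝ → EReal,
    |H v v'| * Real.exp (θ * min (preDeath v) 0) ≤ C
  f2 : ∀ v : ℝ → EReal, ∀ᵐ z ∂(volume : Measure ℝ), ContinuousAt (GFun P X H v) z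

/-- The post-passage path `t ↦ X_{τ(u-x)+t} - u`. -/
def postPath (X : ℝ → Ω → ℝ) (u x : ℝ) (ω : Ω) : ℝ → ℝ :=
  fun t => X (tauT X (u - x) ω + t) ω - u

/-! ### The limit objects `ρ`, `Z`, `W` -/

/-- The exponential distribution with parameter `r`. -/
def expMeasure (r : ℝ) : Measure ℝ :=
  (volume.restrict (Set.Ici (0:ℝ))).withDensity fun t => ENNReal.ofReal (r * Real.exp (-r * t))

/-- The law of the process `W`:
`P(W ∈ dw) = c₂ ∫_ℝ α e^{-α z} P_z(X ∈ dw ; τ(0) < ∞) dz`. -/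
def lawW (P : Measure Ω) (X : ℝ → Ω → ℝ) (α : ℝ) : Measure (ℝ → ℝ) :=
  Measure.bind
    ((volume : Measure ℝ).withDensity fun z =>
      ENNReal.ofReal (c2 P X α * α * Real.exp (-α * z)))
    fun z => Measure.map (fun ω => fun t => z + X t ω) (P.restrict (shiftRuin X z))

/-- `Z` is the Esscher transform of `X`: for each `s ≥ 0` the law of the stopped path
`Z_{· ∧ s}` has density `e^{c₁ s} e^{α X_s}` with respect to the law of `X_{· ∧ s}`. -/
def IsEsscher (P : Measure Ω) (X : ℝ → Ω → ℝ) (α : ℝ)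
    {Ω' : Type*} [MeasurableSpace Ω'] (P' : Measure Ω') (Z : ℝ → Ω' → ℝ) : Prop :=
  ∀ s : ℝ, 0 ≤ s →
    Measure.map (fun ω' => fun t => Z (min t s) ω') P' =
      Measure.map (fun ω => fun t => X (min t s) ω)
        (P.withDensity fun ω => ENNReal.ofReal (Real.exp (c1 P X α * s + α * X s ω)))

/-- The triple `(ρ, Z, W)` of (mutually independent) limit objects, realized on an
auxiliary probability space `(Ω', P')`. -/
structure LimitObjects (P : Measure Ω) (X : ℝ → Ω → ℝ) (α : ℝ)
    {Ω' : Type*} [MeasurableSpace Ω'] (P' : Measure Ω')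
    (ρ : Ω' → ℝ) (Z W : ℝ → Ω' → ℝ) : Prop where
  isProb : IsProbabilityMeasure P'
  rhoLaw : Measure.map ρ P' = expMeasure (c1 P X α)
  zLaw : IsEsscher P X α P' Z
  wLaw : Measure.map (fun ω' => path W ω') P' = lawW P X α
  cadlagZ : ∀ᵐ ω' ∂P', Cadlag (path Z ω')
  cadlagW : ∀ᵐ ω' ∂P', Cadlag (path W ω')
  indepRho : IndepFun ρ (fun ω' => (path Z ω', path W ω')) P'
  indepZW : IndepFun (fun ω' => path Z ω') (fun ω' => path W ω') P'

/-- The pair `(ρ, W)` of independent limit objects (when `Z` is not needed). -/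
structure WRhoObjects (P : Measure Ω) (X : ℝ → Ω → ℝ) (α : ℝ)
    {Ω' : Type*} [MeasurableSpace Ω'] (P' : Measure Ω')
    (ρ : Ω' → ℝ) (W : ℝ → Ω' → ℝ) : Prop where
  isProb : IsProbabilityMeasure P'
  rhoLaw : Measure.map ρ P' = expMeasure (c1 P X α)
  wLaw : Measure.map (fun ω' => path W ω') P' = lawW P X α
  cadlagW : ∀ᵐ ω' ∂P', Cadlag (path W ω')
  indep : IndepFun ρ (fun ω' => path W ω') P'

/-! ### The measures `μ_K` and `ν_x` on path space -/

/-- Path marginal of the measure `μ_K`: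
`μ_K(dw) = c₁ ∫_0^∞ 1(X_{t-} < K) e^{α X_{t-}} P(X_{[0,t)} ∈ dw) dt`. -/
def muK (P : Measure Ω) (X : ℝ → Ω → ℝ) (α K : ℝ) : Measure (ℝ → EReal) :=
  Measure.bind (volume.restrict (Set.Ici (0:ℝ))) fun t =>
    Measure.map (fun ω => kill (path X ω) t)
      (P.withDensity fun ω =>
        if preVal (path X ω) t < K then
          ENNReal.ofReal (c1 P X α * Real.exp (α * preVal (path X ω) t)) else 0)

/-- Path marginal of the measure `μ = μ_∞`:
`μ(dw) = c₁ ∫_0^∞ e^{α X_{t-}} P(X_{[0,t)} ∈ dw) dt`. -/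
def muMeasure (P : Measure Ω) (X : ℝ → Ω → ℝ) (α : ℝ) : Measure (ℝ → EReal) :=
  Measure.bind (volume.restrict (Set.Ici (0:ℝ))) fun t =>
    Measure.map (fun ω => kill (path X ω) t)
      (P.withDensity fun ω =>
        ENNReal.ofReal (c1 P X α * Real.exp (α * preVal (path X ω) t)))

/-- Path marginal of the measure `ν_x`:
`ν_x(dw') = c₂ ∫ 1(z > -x) α e^{-α z} P_z(X ∈ dw'; τ(0) < ∞) dz`. -/
def nuX (P : Measure Ω) (X : ℝ → Ω → ℝ) (α x : ℝ) : Measure (ℝ → EReal) :=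
  Measure.bind
    ((volume : Measure ℝ).withDensity fun z =>
      if -x < z then ENNReal.ofReal (c2 P X α * α * Real.exp (-α * z)) else 0)
    fun z => Measure.map (fun ω => alive fun t => z + X t ω) (P.restrict (shiftRuin X z))

/-- The potential measure `V_X(dζ) = ∫_0^∞ P(X_t ∈ dζ) dt`. -/
def potential (P : Measure Ω) (X : ℝ → Ω → ℝ) : Measure ℝ :=
  Measure.bind (volume.restrict (Set.Ici (0:ℝ))) fun t => Measure.map (X t) P

/-! ### Auxiliary material for Proposition 4.1 -/

section Prop41Aux

open Function

/-- Dyadic approximation of `t` strictly from the left. -/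
def appr (n : ℕ) (t : ℝ) : ℝ := (((⌈t * 2 ^ n⌉ : ℤ) : ℝ) - 1) / 2 ^ n

lemma appr_lt (n : ℕ) (t : ℝ) : appr n t < t := by
  have h2 : (0:ℝ) < 2 ^ n := by positivity
  rw [appr, div_lt_iff₀ h2]
  have := Int.ceil_lt_add_one (t * 2 ^ n)
  linarith

lemma appr_ge (n : ℕ) (t : ℝ) : t - ((2:ℝ) ^ n)⁻¹ ≤ appr n t := by
  have h2 : (0:ℝ) < 2 ^ n := by positivity
  rw [appr, le_div_iff₀ h2]
  have h := Int.le_ceil (t * 2 ^ n)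
  have hinv : ((2:ℝ) ^ n)⁻¹ * 2 ^ n = 1 := inv_mul_cancel₀ h2.ne'
  nlinarith

lemma inv_two_pow_tendsto : Tendsto (fun n : ℕ => ((2:ℝ) ^ n)⁻¹) atTop (nhds 0) := by
  have : (fun n : ℕ => ((2:ℝ) ^ n)⁻¹) = fun n : ℕ => ((2:ℝ)⁻¹) ^ n := by
    funext n; rw [inv_pow]
  rw [this]
  exact tendsto_pow_atTop_nhds_zero_of_lt_one (by norm_num) (by norm_num)

lemma appr_tendsto (t : ℝ) : Tendsto (fun n => appr n t) atTop (nhdsWithin t (Set.Iio t)) := by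
  rw [tendsto_nhdsWithin_iff]
  constructor
  · have hlow : Tendsto (fun n : ℕ => t - ((2:ℝ) ^ n)⁻¹) atTop (nhds (t - 0)) :=
      tendsto_const_nhds.sub inv_two_pow_tendsto
    rw [sub_zero] at hlow
    exact tendsto_of_tendsto_of_tendsto_of_le_of_le hlow tendsto_const_nhds
      (fun n => appr_ge n t) (fun n => (appr_lt n t).le)
  · exact Filter.Eventually.of_forall fun n => appr_lt n t

lemma appr_nonneg_eventually {t : ℝ} (ht : 0 < t) : ∀ᶠ n in atTop, 0 ≤ appr n t := by
  have h := inv_two_pow_tendsto.eventually (gt_mem_nhds ht)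
  filter_upwards [h] with n hn
  have := appr_ge n t
  linarith

variable {Ω : Type*} [MeasurableSpace Ω]

/-- A jointly measurable version of the left limit of `X` at time `t`. -/
def Ylim (X : ℝ → Ω → ℝ) (t : ℝ) (ω : Ω) : ℝ :=
  (⨅ n : ℕ, ⨆ m, ⨆ _ : m ≥ n, ((X (appr m t) ω : ℝ) : EReal)).toReal

lemma measurable_Ylim_fixed (X : ℝ → Ω → ℝ) (hX : ∀ t, Measurable (X t)) (t : ℝ) :
    Measurable fun ω => Ylim X t ω := by
  apply measurable_ereal_toReal.comp
  apply Measurable.iInf; intro n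
  apply Measurable.iSup; intro m
  apply Measurable.iSup; intro _
  exact measurable_coe_real_ereal.comp (hX (appr m t))

lemma measurable_Ylim (X : ℝ → Ω → ℝ) (hX : ∀ t, Measurable (X t)) :
    Measurable fun p : ℝ × Ω => Ylim X p.1 p.2 := by
  apply measurable_ereal_toReal.comp
  apply Measurable.iInf; intro n
  apply Measurable.iSup; intro m
  apply Measurable.iSup; intro _
  apply measurable_coe_real_ereal.comp
  have hrw : (fun p : ℝ × Ω => X (appr m p.1) p.2)
      = (fun q : Ω × ℤ => X (((q.2 : ℝ) - 1) / 2 ^ m) q.1)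
        ∘ fun p : ℝ × Ω => (p.2, ⌈p.1 * 2 ^ m⌉) := by
    funext p; simp [appr]
  rw [hrw]
  exact (measurable_from_prod_countable_left fun k => by simpa using hX ((((k:ℤ):ℝ) - 1) / 2 ^ m)).comp
    (measurable_snd.prodMk ((measurable_fst.mul_const _).ceil))

lemma Ylim_spec (X : ℝ → Ω → ℝ) {ω : Ω} (hc : Cadlag (path X ω)) {t : ℝ} (ht : 0 < t) :
    Tendsto (fun n => X (appr n t) ω) atTop (nhds (Ylim X t ω)) ∧
      Function.leftLim (path X ω) t = Ylim X t ω := by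
  obtain ⟨l, hl⟩ := hc.2 t ht
  have htd : Tendsto (fun n => X (appr n t) ω) atTop (nhds l) := hl.comp (appr_tendsto t)
  have hco : Tendsto (fun n => ((X (appr n t) ω : ℝ) : EReal)) atTop (nhds (l : EReal)) :=
    (continuous_coe_real_ereal.tendsto l).comp htd
  have hsup : (⨅ n : ℕ, ⨆ m, ⨆ _ : m ≥ n, ((X (appr m t) ω : ℝ) : EReal)) = (l : EReal) := by
    rw [← limsup_eq_iInf_iSup_of_nat]
    exact hco.limsup_eq
  have hY : Ylim X t ω = l := by rw [Ylim, hsup, EReal.toReal_coe]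
  constructor
  · rw [hY]; exact htd
  · rw [hY]; exact leftLim_eq_of_tendsto (h := nhdsLT_neBot t) hl

/-- A Lévy process has no fixed jump times: at each fixed time `t > 0` the value and the
left limit agree almost surely. -/
lemma nofix (X : ℝ → Ω → ℝ) {P : Measure Ω} (hlevy : IsLevy P X) {t : ℝ} (ht : 0 < t) :
    ∀ᵐ ω ∂P, X t ω = Ylim X t ω := by
  haveI := hlevy.isProb
  have hX := hlevy.meas
  have hYm : Measurable fun ω => Ylim X t ω := measurable_Ylim_fixed X hX t
  set Δ : Ω → ℝ := fun ω => X t ω - Ylim X t ω with hΔ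
  set u : ℕ → ℝ := fun n => t - appr n t with hu
  have hu_pos : ∀ n, 0 < u n := fun n => sub_pos.mpr (appr_lt n t)
  have hu_tend : Tendsto u atTop (nhds 0) := by
    have : ∀ n, u n ≤ ((2:ℝ) ^ n)⁻¹ := fun n => by
      have := appr_ge n t; simp only [hu]; linarith
    exact tendsto_of_tendsto_of_tendsto_of_le_of_le tendsto_const_nhds inv_two_pow_tendsto
      (fun n => (hu_pos n).le) this
  have key : ∀ δ : ℝ, 0 < δ → P {ω | δ < |Δ ω|} = 0 := by
    intro δ hδ
    set S : Set ℝ := {x | δ / 2 < |x|} with hS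
    have hSmeas : MeasurableSet S := measurableSet_lt measurable_const measurable_abs
    have hPu : Tendsto (fun n => P (X (u n) ⁻¹' S)) atTop (nhds 0) := by
      have heq : (fun n => P (X (u n) ⁻¹' S))
          = fun n => ∫⁻ ω, (X (u n) ⁻¹' S).indicator (fun _ => (1:ℝ≥0∞)) ω ∂P :=
        funext fun n => (lintegral_indicator_one ((hX _) hSmeas)).symm
      rw [heq]
      have h0 : Tendsto (fun n => ∫⁻ ω, (X (u n) ⁻¹' S).indicator (fun _ => (1:ℝ≥0∞)) ω ∂P)
          atTop (nhds (∫⁻ _ : Ω, (0:ℝ≥0∞) ∂P)) := by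
        apply tendsto_lintegral_of_dominated_convergence (fun _ => (1:ℝ≥0∞))
        · intro n; exact measurable_const.indicator ((hX _) hSmeas)
        · intro n
          filter_upwards with ω
          by_cases h : ω ∈ X (u n) ⁻¹' S <;> simp [Set.indicator_apply, h]
        · simp
        · filter_upwards [hlevy.cadlag, hlevy.init] with ω hcad h0ω
          have hwt : Tendsto (fun n => X (u n) ω) atTop (nhds 0) := by
            have hrc := hcad.1 0 le_rfl
            have hun : Tendsto u atTop (nhdsWithin 0 (Set.Ici 0)) := by
              rw [tendsto_nhdsWithin_iff]
              exact ⟨hu_tend, Filter.Eventually.of_forall fun n => (hu_pos n).le⟩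
            have := hrc.tendsto.comp hun
            simpa [path, Function.comp_def, h0ω] using this
          have hev : ∀ᶠ n in atTop,
              (X (u n) ⁻¹' S).indicator (fun _ => (1:ℝ≥0∞)) ω = 0 := by
            have habs : Tendsto (fun n => |X (u n) ω|) atTop (nhds |(0:ℝ)|) :=
              (continuous_abs.tendsto 0).comp hwt
            rw [abs_zero] at habs
            have := habs.eventually (gt_mem_nhds (by linarith : (0:ℝ) < δ / 2))
            filter_upwards [this] with n hn
            have : ω ∉ X (u n) ⁻¹' S := by
              simp only [Set.mem_preimage, hS, Set.mem_setOf_eq]; linarith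
            simp [Set.indicator_apply, this]
          exact Tendsto.congr' (hev.mono fun n h => h.symm) tendsto_const_nhds
      simpa using h0
    set B : ℕ → Set Ω := fun n => {ω | δ / 2 < |X t ω - X (appr n t) ω|} with hB
    have hBP : ∀ n, 0 ≤ appr n t → P (B n) = P (X (u n) ⁻¹' S) := by
      intro n hn
      have hst := hlevy.stationary (appr n t) (u n) hn (hu_pos n).le
      have harg : appr n t + u n = t := by simp [hu]
      rw [harg] at hst
      have h1 : P (B n) = Measure.map (fun ω => X t ω - X (appr n t) ω) P S := by
        rw [Measure.map_apply (f := fun ω => X t ω - X (appr n t) ω) ((hX t).sub (hX _)) hSmeas]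
        rfl
      rw [h1, hst, Measure.map_apply (hX _) hSmeas]
    have hIN : ∀ N : ℕ, P (⋂ n, ⋂ _ : N ≤ n, B n) = 0 := by
      intro N
      have hle : ∀ᶠ m in atTop, P (⋂ n, ⋂ _ : N ≤ n, B n) ≤ P (X (u m) ⁻¹' S) := by
        filter_upwards [appr_nonneg_eventually ht, eventually_ge_atTop N] with m hm hNm
        calc P (⋂ n, ⋂ _ : N ≤ n, B n) ≤ P (B m) :=
              measure_mono (Set.iInter₂_subset m hNm)
          _ = P (X (u m) ⁻¹' S) := hBP m hm
      exact le_antisymm (ge_of_tendsto hPu hle) (by positivity)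
    have hsub : ∀ᵐ ω ∂P, δ < |Δ ω| → ω ∈ ⋃ N : ℕ, ⋂ n, ⋂ _ : N ≤ n, B n := by
      filter_upwards [hlevy.cadlag] with ω hcad hδω
      have htd := (Ylim_spec X hcad ht).1
      have hDt : Tendsto (fun n => |X t ω - X (appr n t) ω|) atTop (nhds |Δ ω|) :=
        (continuous_abs.tendsto _).comp (tendsto_const_nhds.sub htd)
      have hev : ∀ᶠ n in atTop, δ / 2 < |X t ω - X (appr n t) ω| :=
        hDt.eventually (lt_mem_nhds (by linarith))
      obtain ⟨N, hN⟩ := eventually_atTop.mp hev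
      exact Set.mem_iUnion.mpr ⟨N, Set.mem_iInter.mpr fun n => Set.mem_iInter.mpr fun hn =>
        hN n hn⟩
    have hmono : P {ω | δ < |Δ ω|} ≤ P (⋃ N : ℕ, ⋂ n, ⋂ _ : N ≤ n, B n) :=
      measure_mono_ae hsub
    rw [measure_iUnion_null hIN] at hmono
    exact le_antisymm hmono (by positivity)
  have hnull : P {ω | Δ ω ≠ 0} = 0 := by
    have hsub2 : {ω | Δ ω ≠ 0} ⊆ ⋃ m : ℕ, {ω | 1 / ((m:ℝ) + 1) < |Δ ω|} := by
      intro ω hω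
      obtain ⟨m, hm⟩ := exists_nat_one_div_lt (abs_pos.mpr hω)
      exact Set.mem_iUnion.mpr ⟨m, hm⟩
    exact measure_mono_null hsub2 (measure_iUnion_null fun m => key _ (by positivity))
  refine ae_iff.mpr ?_
  have : {ω | ¬X t ω = Ylim X t ω} = {ω | Δ ω ≠ 0} := by
    ext ω; simp [hΔ, sub_eq_zero]
  rw [this]
  exact hnull

/-- `bind` respects a.e. equality of kernels. -/
lemma bind_congr_ae {α β : Type*} [MeasurableSpace α] [MeasurableSpace β]
    {m : Measure α} {f g : α → Measure β} (h : f =ᵐ[m] g) : m.bind f = m.bind g := by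
  simp only [Measure.bind]
  rw [Measure.map_congr h]

lemma kill_stop (w : ℝ → ℝ) (r : ℝ) : kill (fun t => w (min t r)) r = kill w r := by
  funext v
  by_cases h : v < r
  · simp [kill, h, min_eq_left h.le]
  · simp [kill, h]

end Prop41Aux

/-- **Proposition 4.1 (Identification of the pre-jump limit law).**  Assume
`E e^{α X_1} < 1` for some `α > 0`.  If `Z` is the Esscher transform of `X` and `ρ` an
independent exponential time with parameter `c₁`, then the law of the killed path
`{Z_t : t < ρ}` is the path marginal `μ(dw)` of the probability measure `μ`. -/
theorem esscher_killed_law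
    {Ω Ω' : Type*} [MeasurableSpace Ω] [MeasurableSpace Ω']
    (P : Measure Ω) (X : ℝ → Ω → ℝ) (α : ℝ) (hα : 0 < α)
    (hlevy : IsLevy P X)
    (hint : Integrable (fun ω => Real.exp (α * X 1 ω)) P)
    (hlt : ∫ ω, Real.exp (α * X 1 ω) ∂P < 1)
    (P' : Measure Ω') (hP' : IsProbabilityMeasure P')
    (ρ : Ω' → ℝ) (Z : ℝ → Ω' → ℝ)
    (hρ : Measure.map ρ P' = expMeasure (c1 P X α))
    (hZ : IsEsscher P X α P' Z)
    (hindep : IndepFun ρ (fun ω' => path Z ω') P') :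
    Measure.map (fun ω' => kill (path Z ω') (ρ ω')) P' = muMeasure P X α := by
  classical
  haveI hPprob := hlevy.isProb
  haveI := hP'
  have hX := hlevy.meas
  set c := c1 P X α with hc
  have hIpos : 0 < ∫ ω, Real.exp (α * X 1 ω) ∂P := by
    rw [integral_pos_iff_support_of_nonneg (fun ω => (Real.exp_pos _).le) hint]
    have hsupp : Function.support (fun ω => Real.exp (α * X 1 ω)) = Set.univ :=
      Set.eq_univ_of_forall fun ω => (Real.exp_pos _).ne'
    rw [hsupp]
    simp
  have hcpos : 0 < c := by
    rw [hc, c1, neg_pos]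
    exact Real.log_neg hIpos hlt
  -- measurability toolbox
  have hkillXr : ∀ r : ℝ, Measurable fun ω => kill (path X ω) r := by
    intro r
    apply measurable_pi_lambda; intro v
    by_cases h : v < r
    · simpa [kill, h, path, Function.comp_def] using measurable_coe_real_ereal.comp (hX v)
    · simpa [kill, h] using (measurable_const : Measurable fun _ : Ω => (⊥ : EReal))
  have hkillw : ∀ r : ℝ, Measurable fun w : ℝ → ℝ => kill w r := by
    intro r
    apply measurable_pi_lambda; intro v
    by_cases h : v < r
    · simpa [kill, h, Function.comp_def] using measurable_coe_real_ereal.comp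
        (measurable_pi_apply v)
    · simpa [kill, h] using (measurable_const : Measurable fun _ : ℝ → ℝ => (⊥ : EReal))
  have hFkill : Measurable fun p : ℝ × (ℝ → ℝ) => kill p.2 p.1 := by
    apply measurable_pi_lambda; intro v
    have heq : (fun p : ℝ × (ℝ → ℝ) => kill p.2 p.1 v)
        = fun p : ℝ × (ℝ → ℝ) => if v < p.1 then ((p.2 v : ℝ) : EReal) else ⊥ := rfl
    rw [heq]
    exact Measurable.ite (measurableSet_lt measurable_const measurable_fst)
      (measurable_coe_real_ereal.comp ((measurable_pi_apply v).comp measurable_snd))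
      measurable_const
  have hkillXj : Measurable fun p : ℝ × Ω => kill (path X p.2) p.1 := by
    apply measurable_pi_lambda; intro v
    have heq : (fun p : ℝ × Ω => kill (path X p.2) p.1 v)
        = fun p : ℝ × Ω => if v < p.1 then ((X v p.2 : ℝ) : EReal) else ⊥ := rfl
    rw [heq]
    exact Measurable.ite (measurableSet_lt measurable_const measurable_fst)
      (measurable_coe_real_ereal.comp ((hX v).comp measurable_snd)) measurable_const
  have hYj := measurable_Ylim X hX
  have hstop : ∀ r : ℝ, Measurable fun w : ℝ → ℝ => (fun t => w (min t r)) :=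
    fun r => measurable_pi_lambda _ fun t => measurable_pi_apply (min t r)
  have hstopX : ∀ r : ℝ, Measurable fun ω => (fun t => X (min t r) ω) :=
    fun r => measurable_pi_lambda _ fun t => hX (min t r)
  have hfmeas' : Measurable fun t : ℝ => ENNReal.ofReal (c * Real.exp (-c * t)) :=
    ENNReal.measurable_ofReal.comp
      ((Real.measurable_exp.comp (measurable_id.const_mul (-c))).const_mul c)
  -- the kernel K
  set K : ℝ → Measure (ℝ → EReal) := fun t =>
    Measure.map (fun ω => kill (path X ω) t)
      (P.withDensity fun ω => ENNReal.ofReal (c * Real.exp (α * Ylim X t ω))) with hK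
  have hKapply : ∀ (A : Set (ℝ → EReal)), MeasurableSet A → ∀ t : ℝ,
      K t A = ∫⁻ ω, ({p : ℝ × Ω | kill (path X p.2) p.1 ∈ A}.indicator
        (fun p => ENNReal.ofReal (c * Real.exp (α * Ylim X p.1 p.2)))) (t, ω) ∂P := by
    intro A hA t
    simp only [hK]
    rw [Measure.map_apply (hkillXr t) hA, withDensity_apply _ ((hkillXr t) hA),
      ← lintegral_indicator ((hkillXr t) hA)]
    refine lintegral_congr fun ω => ?_
    by_cases h : kill (path X ω) t ∈ A <;>
      simp [Set.indicator_apply, h]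
  have hKmeas : Measurable K := by
    apply Measure.measurable_of_measurable_coe
    intro A hA
    have heq : (fun t => K t A) = fun t =>
        ∫⁻ ω, ({p : ℝ × Ω | kill (path X p.2) p.1 ∈ A}.indicator
          (fun p => ENNReal.ofReal (c * Real.exp (α * Ylim X p.1 p.2)))) (t, ω) ∂P :=
      funext (hKapply A hA)
    rw [heq]
    apply Measurable.lintegral_prod_right'
    apply Measurable.indicator
    · exact ENNReal.measurable_ofReal.comp
        ((Real.measurable_exp.comp (hYj.const_mul α)).const_mul c)
    · exact hkillXj hA
  -- a.e. positivity of times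
  have h0 : ∀ᵐ t : ℝ ∂(volume.restrict (Set.Ici (0:ℝ))), 0 < t := by
    rw [ae_restrict_iff' measurableSet_Ici]
    refine ae_iff.mpr (measure_mono_null ?_ (measure_singleton (0:ℝ)))
    intro t htmem
    simp only [Set.mem_setOf_eq, not_forall, Set.mem_Ici, not_lt] at htmem
    obtain ⟨h1, h2⟩ := htmem
    simp only [Set.mem_singleton_iff]
    linarith
  -- muMeasure is the bind of K
  have hmu : muMeasure P X α = (volume.restrict (Set.Ici (0:ℝ))).bind K := by
    rw [muMeasure]
    apply bind_congr_ae
    filter_upwards [h0] with t ht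
    have hdens : (fun ω => ENNReal.ofReal
          (c1 P X α * Real.exp (α * preVal (path X ω) t)))
        =ᵐ[P] fun ω => ENNReal.ofReal (c * Real.exp (α * Ylim X t ω)) := by
      filter_upwards [hlevy.cadlag] with ω hcad
      rw [preVal, if_pos ht, (Ylim_spec X hcad ht).2, hc]
    simp only [hK]
    rw [withDensity_congr_ae hdens]
  -- ρ is a.e. measurable
  have hρae : AEMeasurable ρ P' := by
    by_contra h
    rw [Measure.map_of_not_aemeasurable h] at hρ
    have h1 : (0 : ℝ≥0∞) = expMeasure c Set.univ := by rw [← hρ]; rfl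
    rw [expMeasure, withDensity_apply _ MeasurableSet.univ, Measure.restrict_univ] at h1
    have h2 := (lintegral_eq_zero_iff hfmeas').mp h1.symm
    have hFalse : ∀ᵐ t : ℝ ∂(volume.restrict (Set.Ici (0:ℝ))), False := by
      filter_upwards [h2] with t htz
      rw [Pi.zero_apply] at htz
      exact (ENNReal.ofReal_pos.mpr (by positivity)).ne' htz
    have h5 := ae_iff.mp hFalse
    simp only [not_false_eq_true, Set.setOf_true] at h5
    rw [Measure.restrict_apply_univ, Real.volume_Ici] at h5
    exact ENNReal.top_ne_zero h5
  -- the stopped Esscher paths are a.e. measurable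
  have hZn : ∀ n : ℕ, AEMeasurable (fun ω' => fun t => Z (min t (n:ℝ)) ω') P' := by
    intro n
    by_contra h
    have h1 := hZ (n:ℝ) (Nat.cast_nonneg n)
    rw [Measure.map_of_not_aemeasurable h] at h1
    have h2 : (0 : ℝ≥0∞) = (Measure.map (fun ω => fun t => X (min t (n:ℝ)) ω)
        (P.withDensity fun ω =>
          ENNReal.ofReal (Real.exp (c * (n:ℝ) + α * X (n:ℝ) ω)))) Set.univ := by
      rw [← h1]; rfl
    rw [Measure.map_apply (hstopX (n:ℝ)) MeasurableSet.univ, Set.preimage_univ,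
      withDensity_apply _ MeasurableSet.univ, Measure.restrict_univ] at h2
    have hDmeas : Measurable fun ω =>
        ENNReal.ofReal (Real.exp (c * (n:ℝ) + α * X (n:ℝ) ω)) :=
      ENNReal.measurable_ofReal.comp (Real.measurable_exp.comp
        (((hX (n:ℝ)).const_mul α).const_add _))
    have h3 := (lintegral_eq_zero_iff hDmeas).mp h2.symm
    have hFalse : ∀ᵐ ω ∂P, False := by
      filter_upwards [h3] with ω hω
      rw [Pi.zero_apply] at hω
      exact (ENNReal.ofReal_pos.mpr (Real.exp_pos _)).ne' hω
    have h5 := ae_iff.mp hFalse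
    simp only [not_false_eq_true, Set.setOf_true, measure_univ] at h5
    exact one_ne_zero h5
  -- the path of Z is a.e. measurable
  have hpathZ : AEMeasurable (fun ω' => path Z ω') P' := by
    refine ⟨fun ω' => fun t => (hZn ⌈t⌉₊).mk _ ω' t, ?_, ?_⟩
    · exact measurable_pi_lambda _ fun t =>
        (measurable_pi_apply t).comp ((hZn ⌈t⌉₊).measurable_mk)
    · have hall : ∀ᵐ ω' ∂P', ∀ n : ℕ,
          (fun t => Z (min t (n:ℝ)) ω') = (hZn n).mk _ ω' :=
        ae_all_iff.mpr fun n => (hZn n).ae_eq_mk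
      filter_upwards [hall] with ω' hω'
      funext t
      show Z t ω' = (hZn ⌈t⌉₊).mk _ ω' t
      rw [← congrFun (hω' ⌈t⌉₊) t, min_eq_left (Nat.le_ceil t)]
  set μZ := Measure.map (fun ω' => path Z ω') P' with hμZ
  haveI : IsProbabilityMeasure μZ := Measure.isProbabilityMeasure_map hpathZ
  have hjoint : Measure.map (fun ω' => (ρ ω', path Z ω')) P' = (expMeasure c).prod μZ := by
    rw [← hρ, hμZ]
    exact (ProbabilityTheory.indepFun_iff_map_prod_eq_prod_map_map hρae hpathZ).mp hindep
  refine Measure.ext fun A hA => ?_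
  -- the law of the killed Esscher path, sliced at a fixed time r ≥ 0
  have hkey : ∀ r : ℝ, 0 ≤ r → μZ ((fun w => kill w r) ⁻¹' A)
      = ∫⁻ ω, ((fun ω => kill (path X ω) r) ⁻¹' A).indicator
          (fun ω => ENNReal.ofReal (Real.exp (c * r + α * X r ω))) ω ∂P := by
    intro r hr
    have hset1 : (fun w : ℝ → ℝ => kill w r) ⁻¹' A
        = (fun w : ℝ → ℝ => fun t => w (min t r)) ⁻¹' ((fun w => kill w r) ⁻¹' A) := by
      ext w
      simp only [Set.mem_preimage]
      rw [kill_stop]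
    rw [hset1, ← Measure.map_apply (hstop r) ((hkillw r) hA)]
    rw [hμZ, AEMeasurable.map_map_of_aemeasurable ((hstop r).aemeasurable) hpathZ]
    have hcomp : ((fun w : ℝ → ℝ => fun t => w (min t r)) ∘ fun ω' => path Z ω')
        = fun ω' => fun t => Z (min t r) ω' := rfl
    rw [hcomp, hZ r hr]
    rw [Measure.map_apply (hstopX r) ((hkillw r) hA)]
    have hset2 : (fun ω => fun t => X (min t r) ω) ⁻¹' ((fun w => kill w r) ⁻¹' A)
        = (fun ω => kill (path X ω) r) ⁻¹' A := by
      ext ω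
      simp only [Set.mem_preimage]
      have heq2 : kill (fun t => X (min t r) ω) r = kill (path X ω) r :=
        kill_stop (path X ω) r
      rw [heq2]
    rw [hset2, withDensity_apply _ ((hkillXr r) hA), ← lintegral_indicator ((hkillXr r) hA)]
  have hae0 : ∀ᵐ r : ℝ ∂(expMeasure c), (0:ℝ) ≤ r := by
    have hle : MeasureTheory.ae (expMeasure c) ≤
        MeasureTheory.ae (volume.restrict (Set.Ici (0:ℝ))) := by
      rw [expMeasure]
      exact (withDensity_absolutelyContinuous _ _).ae_le
    exact (ae_restrict_mem measurableSet_Ici).filter_mono hle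
  have hae1 : ∀ᵐ r : ℝ ∂(expMeasure c), μZ ((fun w => kill w r) ⁻¹' A)
      = ∫⁻ ω, ((fun ω => kill (path X ω) r) ⁻¹' A).indicator
          (fun ω => ENNReal.ofReal (Real.exp (c * r + α * X r ω))) ω ∂P := by
    filter_upwards [hae0] with r hr
    exact hkey r hr
  have hLHS : Measure.map (fun ω' => kill (path Z ω') (ρ ω')) P' A
      = ∫⁻ r, μZ ((fun w => kill w r) ⁻¹' A) ∂(expMeasure c) := by
    have hcomp : (fun ω' => kill (path Z ω') (ρ ω'))
        = (fun p : ℝ × (ℝ → ℝ) => kill p.2 p.1) ∘ fun ω' => (ρ ω', path Z ω') := rfl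
    rw [hcomp, ← AEMeasurable.map_map_of_aemeasurable hFkill.aemeasurable
      (hρae.prodMk hpathZ), hjoint, Measure.map_apply hFkill hA,
      Measure.prod_apply (hFkill hA)]
    rfl
  have h2 : ∀ᵐ r : ℝ ∂(volume.restrict (Set.Ici (0:ℝ))),
      ENNReal.ofReal (c * Real.exp (-c * r))
        * (∫⁻ ω, ((fun ω => kill (path X ω) r) ⁻¹' A).indicator
            (fun ω => ENNReal.ofReal (Real.exp (c * r + α * X r ω))) ω ∂P)
      = K r A := by
    filter_upwards [h0] with r hrpos
    rw [hKapply A hA r, ← lintegral_const_mul' _ _ ENNReal.ofReal_ne_top]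
    apply lintegral_congr_ae
    filter_upwards [nofix X hlevy hrpos] with ω hω
    by_cases hmem : kill (path X ω) r ∈ A
    · have hm1 : ω ∈ (fun ω => kill (path X ω) r) ⁻¹' A := hmem
      have hm2 : (r, ω) ∈ {p : ℝ × Ω | kill (path X p.2) p.1 ∈ A} := hmem
      rw [Set.indicator_of_mem hm1, Set.indicator_of_mem hm2]
      rw [← hω, ← ENNReal.ofReal_mul (by positivity)]
      congr 1
      rw [mul_assoc, ← Real.exp_add]
      have harg : -c * r + (c * r + α * X r ω) = α * X r ω := by ring
      rw [harg]
    · have hm1 : ω ∉ (fun ω => kill (path X ω) r) ⁻¹' A := hmem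
      have hm2 : (r, ω) ∉ {p : ℝ × Ω | kill (path X p.2) p.1 ∈ A} := hmem
      rw [Set.indicator_of_notMem hm1, Set.indicator_of_notMem hm2, mul_zero]
  calc Measure.map (fun ω' => kill (path Z ω') (ρ ω')) P' A
      = ∫⁻ r, μZ ((fun w => kill w r) ⁻¹' A) ∂(expMeasure c) := hLHS
    _ = ∫⁻ r, (∫⁻ ω, ((fun ω => kill (path X ω) r) ⁻¹' A).indicator
          (fun ω => ENNReal.ofReal (Real.exp (c * r + α * X r ω))) ω ∂P)
            ∂(expMeasure c) := lintegral_congr_ae hae1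
    _ = ∫⁻ r in Set.Ici (0:ℝ), ENNReal.ofReal (c * Real.exp (-c * r))
          * (∫⁻ ω, ((fun ω => kill (path X ω) r) ⁻¹' A).indicator
            (fun ω => ENNReal.ofReal (Real.exp (c * r + α * X r ω))) ω ∂P) ∂volume := by
        rw [expMeasure]
        rw [lintegral_withDensity_eq_lintegral_mul_non_measurable _ hfmeas'
          (Filter.Eventually.of_forall fun r => ENNReal.ofReal_lt_top) _]
        rfl
    _ = ∫⁻ r in Set.Ici (0:ℝ), K r A ∂volume := lintegral_congr_ae h2
    _ = muMeasure P X α A := by rw [hmu, Measure.bind_apply hA hKmeas.aemeasurable]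


end GriffinMaller
end
end

section
/- Weak convergence of the shifted, rescaled Lévy tail (equation (4.17)). Let ν be a measure on (0,∞), finite on (c,∞) for every c>0 and nonzero on some (x₀,∞), whose tail ν̄(x)=ν((x,∞)) satisfies ν̄(u+x)/ν̄(u) → e^{−αx} as u→∞ for every x∈ℝ, for some α>0. Then for each fixed φ∈ℝ and x≥0, the finite measures B ↦ ν(u−φ+B)/ν̄(u) on (−x,∞) converge weakly, as u→∞, to the measure e^{αφ} α e^{−αz} dz on (−x,∞); equivalently, for every bounded function g on (−x,∞) that is continuous almost everywhere, ∫_{z>−x} g(z) ν(u−φ+dz)/ν̄(u) → e^{αφ} ∫_{−x}^∞ g(z) α e^{−αz} dz. -/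
open MeasureTheory ProbabilityTheory Filter Set Real
open scoped ENNReal NNReal

noncomputable section

namespace GriffinMaller

/-! ### Lévy processes -/

variable {Ω : Type*} [MeasurableSpace Ω]

open scoped Topology

/-- Generalized right-continuous inverse of the tail of `μ` on `[a,∞)`. -/
def qinv (μ : Measure ℝ) (a : ℝ) (s : ℝ) : ℝ :=
  sSup (insert a {y | a ≤ y ∧ s < (μ (Set.Ioi y)).toReal})

variable {μ : Measure ℝ} {a : ℝ}

lemma tail_ne_top (hfin : μ (Ioi a) ≠ ⊤) {y : ℝ} (hy : a ≤ y) : μ (Ioi y) ≠ ⊤ :=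
  ne_top_of_le_ne_top hfin (measure_mono (Ioi_subset_Ioi hy))

lemma tail_mono (hfin : μ (Ioi a) ≠ ⊤) {y y' : ℝ} (hy : a ≤ y) (h : y ≤ y') :
    (μ (Ioi y')).toReal ≤ (μ (Ioi y)).toReal :=
  ENNReal.toReal_mono (tail_ne_top hfin hy) (measure_mono (Ioi_subset_Ioi h))

lemma qinv_bddAbove (hfin : μ (Ioi a) ≠ ⊤) {s : ℝ} (hs : 0 < s) :
    BddAbove (insert a {y | a ≤ y ∧ s < (μ (Set.Ioi y)).toReal}) := by
  have h0 : Tendsto (fun n : ℕ => μ (Ioi (a + n))) atTop (𝓝 (μ (⋂ n : ℕ, Ioi (a + (n : ℝ))))) :=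
    tendsto_measure_iInter_atTop (fun _ => measurableSet_Ioi.nullMeasurableSet)
      (fun n m h => Ioi_subset_Ioi (by have := (Nat.cast_le (α := ℝ)).2 h; linarith))
      ⟨0, by simpa using hfin⟩
  have hempty : (⋂ n : ℕ, Ioi (a + (n : ℝ))) = ∅ := by
    ext z
    simp only [mem_iInter, mem_Ioi, mem_empty_iff_false, iff_false, not_forall, not_lt]
    obtain ⟨n, hn⟩ := exists_nat_gt (z - a)
    exact ⟨n, by linarith⟩
  rw [hempty, measure_empty] at h0
  obtain ⟨n, hn⟩ :=
    (h0.eventually_lt_const (show (0 : ℝ≥0∞) < ENNReal.ofReal s from ENNReal.ofReal_pos.2 hs)).exists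
  refine ⟨a + n, ?_⟩
  rintro y (rfl | ⟨hy1, hy2⟩)
  · linarith [Nat.cast_nonneg (α := ℝ) n]
  · by_contra h
    push_neg at h
    have h1 : (μ (Ioi y)).toReal ≤ (μ (Ioi (a + (n : ℝ)))).toReal :=
      tail_mono hfin (by linarith [Nat.cast_nonneg (α := ℝ) n]) h.le
    have h2 : (μ (Ioi (a + (n : ℝ)))).toReal < s := ENNReal.toReal_lt_of_lt_ofReal hn
    linarith

lemma le_qinv (hfin : μ (Ioi a) ≠ ⊤) {s : ℝ} (hs : 0 < s) : a ≤ qinv μ a s :=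
  le_csSup (qinv_bddAbove hfin hs) (mem_insert a _)

lemma lt_qinv_iff (hfin : μ (Ioi a) ≠ ⊤) {y s : ℝ} (hy : a ≤ y) (hs : 0 < s) :
    y < qinv μ a s ↔ s < (μ (Ioi y)).toReal := by
  constructor
  · intro h
    obtain ⟨y', hy', hyy'⟩ := exists_lt_of_lt_csSup (insert_nonempty _ _) h
    rcases hy' with rfl | ⟨h1, h2⟩
    · exact absurd hyy' (not_lt.2 hy)
    · exact lt_of_lt_of_le h2 (tail_mono hfin hy hyy'.le)
  · intro h
    have hmono : Monotone fun n : ℕ => Ioi (y + 1 / ((n : ℝ) + 1)) := by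
      intro n m hnm
      refine Ioi_subset_Ioi (add_le_add (le_refl y) ?_)
      apply one_div_le_one_div_of_le (by positivity)
      have := (Nat.cast_le (α := ℝ)).2 hnm; linarith
    have h1 : Tendsto (fun n : ℕ => μ (Ioi (y + 1 / ((n : ℝ) + 1)))) atTop
        (𝓝 (μ (⋃ n : ℕ, Ioi (y + 1 / ((n : ℝ) + 1))))) :=
      tendsto_measure_iUnion_atTop hmono
    have hU : (⋃ n : ℕ, Ioi (y + 1 / ((n : ℝ) + 1))) = Ioi y := by
      ext z
      simp only [mem_iUnion, mem_Ioi]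
      constructor
      · rintro ⟨n, hn⟩
        have : (0 : ℝ) < 1 / ((n : ℝ) + 1) := by positivity
        linarith
      · intro hz
        obtain ⟨n, hn⟩ := exists_nat_one_div_lt (sub_pos.2 hz)
        exact ⟨n, by linarith⟩
    rw [hU] at h1
    have hrc : Tendsto (fun n : ℕ => (μ (Ioi (y + 1 / ((n : ℝ) + 1)))).toReal) atTop
        (𝓝 ((μ (Ioi y)).toReal)) :=
      (ENNReal.tendsto_toReal (tail_ne_top hfin hy)).comp h1
    obtain ⟨n, hn⟩ := (hrc.eventually_const_lt h).exists
    have hpos : (0 : ℝ) < 1 / ((n : ℝ) + 1) := by positivity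
    have hmem : y + 1 / ((n : ℝ) + 1) ∈ {y' | a ≤ y' ∧ s < (μ (Set.Ioi y')).toReal} :=
      ⟨by linarith, hn⟩
    have := le_csSup (qinv_bddAbove hfin hs) (mem_insert_of_mem a hmem)
    calc y < y + 1 / ((n : ℝ) + 1) := by linarith
      _ ≤ qinv μ a s := this

lemma qinv_aemeasurable (hfin : μ (Ioi a) ≠ ⊤) (m : ℝ) :
    AEMeasurable (qinv μ a) (volume.restrict (Ioo 0 m)) := by
  have hanti : Antitone fun t : ℝ => qinv μ a (Real.exp t) := by
    intro s t hst
    refine csSup_le_csSup (qinv_bddAbove hfin (exp_pos s)) (insert_nonempty _ _)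
      (insert_subset_insert fun y hy => ⟨hy.1, lt_of_le_of_lt (exp_le_exp.2 hst) hy.2⟩)
  refine ((hanti.measurable.comp Real.measurable_log).aemeasurable).congr ?_
  filter_upwards [self_mem_ae_restrict measurableSet_Ioo] with s hs
  simp only [Function.comp_apply]
  rw [Real.exp_log hs.1]

lemma map_qinv (hfin : μ (Ioi a) ≠ ⊤) :
    μ.restrict (Ioi a) =
      Measure.map (qinv μ a) (volume.restrict (Ioo 0 ((μ (Ioi a)).toReal))) := by
  set m := (μ (Ioi a)).toReal with hm
  haveI : IsFiniteMeasure (μ.restrict (Ioi a)) :=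
    ⟨by rw [Measure.restrict_apply_univ]; exact hfin.lt_top⟩
  have hQae : AEMeasurable (qinv μ a) (volume.restrict (Ioo 0 m)) := qinv_aemeasurable hfin m
  refine ext_of_generate_finite (range Ioi)
    (BorelSpace.measurable_eq.trans (borel_eq_generateFrom_Ioi ℝ)) isPiSystem_Ioi ?_ ?_
  · rintro s ⟨y, rfl⟩
    rw [Measure.restrict_apply measurableSet_Ioi, Ioi_inter_Ioi,
      Measure.map_apply_of_aemeasurable hQae measurableSet_Ioi,
      Measure.restrict_apply' measurableSet_Ioo]
    have hset : qinv μ a ⁻¹' Ioi y ∩ Ioo 0 m = Ioo 0 ((μ (Ioi (max y a))).toReal) := by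
      ext s
      simp only [mem_inter_iff, mem_preimage, mem_Ioi, mem_Ioo]
      constructor
      · rintro ⟨hqs, hs0, hsm⟩
        refine ⟨hs0, ?_⟩
        rcases le_or_gt a y with hya | hya
        · rw [max_eq_left hya]
          exact (lt_qinv_iff hfin hya hs0).1 hqs
        · rw [max_eq_right hya.le]
          exact hsm
      · rintro ⟨hs0, hst⟩
        have hsm : s < m := lt_of_lt_of_le hst (tail_mono hfin le_rfl (le_max_right y a))
        refine ⟨?_, hs0, hsm⟩
        rcases le_or_gt a y with hya | hya
        · rw [max_eq_left hya] at hst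
          exact (lt_qinv_iff hfin hya hs0).2 hst
        · exact lt_of_lt_of_le hya (le_qinv hfin hs0)
    rw [hset, Real.volume_Ioo, sub_zero,
      ENNReal.ofReal_toReal (tail_ne_top hfin (le_max_right y a))]
  · rw [Measure.restrict_apply_univ,
      Measure.map_apply_of_aemeasurable hQae MeasurableSet.univ, preimage_univ,
      Measure.restrict_apply_univ, Real.volume_Ioo, sub_zero, ENNReal.ofReal_toReal hfin]

lemma setIntegral_qinv (hfin : μ (Ioi a) ≠ ⊤) {g : ℝ → ℝ} (hg : Measurable g) :
    ∫ z in Ioi a, g z ∂μ =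
      ∫ s in Ioo 0 ((μ (Ioi a)).toReal), g (qinv μ a s) := by
  have h := map_qinv hfin
  calc ∫ z in Ioi a, g z ∂μ
      = ∫ z, g z ∂(Measure.map (qinv μ a) (volume.restrict (Ioo 0 ((μ (Ioi a)).toReal)))) := by
        rw [← h]
    _ = ∫ s in Ioo 0 ((μ (Ioi a)).toReal), g (qinv μ a s) := by
        rw [integral_map (qinv_aemeasurable hfin _) (by rw [← h]; exact hg.aestronglyMeasurable)]


/-- **Equation (4.17) (Weak convergence of the shifted, rescaled Lévy tail).**  Let `ν`
be a measure on `(0,∞)`, finite on `(c,∞)` for every `c > 0` and nonzero on some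
`(x₀,∞)`, with `ν̄(u+y)/ν̄(u) → e^{-αy}` for every `y`.  Then for fixed `φ ∈ ℝ` and
`x ≥ 0`, the measures `ν(u - φ + dz)/ν̄(u)` on `(-x,∞)` converge weakly to
`e^{αφ} α e^{-αz} dz`: for every bounded measurable `g` on `(-x,∞)` that is continuous
almost everywhere,
`∫_{z > -x} g(z) ν(u-φ+dz)/ν̄(u) → e^{αφ} ∫_{-x}^∞ g(z) α e^{-αz} dz`. -/
theorem shifted_tail_weak_convergence
    (α : ℝ) (hα : 0 < α) (ν : Measure ℝ)
    (hsupp : ν (Set.Iic 0) = 0) (hfin : ∀ c : ℝ, 0 < c → ν (Set.Ioi c) < ⊤)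
    (hnz : ∃ x₀ : ℝ, 0 < x₀ ∧ 0 < ν (Set.Ioi x₀))
    (hconv : ∀ y : ℝ, Tendsto (fun u => mtail ν (u + y) / mtail ν u) atTop
      (nhds (Real.exp (-α * y))))
    (φ x : ℝ) (hx : 0 ≤ x)
    (g : ℝ → ℝ) (hg_meas : Measurable g) (hg_bdd : ∃ C : ℝ, ∀ z, |g z| ≤ C)
    (hg_cont : ∀ᵐ z ∂(volume.restrict (Set.Ioi (-x))), ContinuousAt g z) :
    Tendsto (fun u =>
        (∫ ξ in {ξ : ℝ | -x < ξ - (u - φ)}, g (ξ - (u - φ)) ∂ν) / mtail ν u)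
      atTop
      (nhds (Real.exp (α * φ) *
        ∫ z in Set.Ioi (-x), g z * (α * Real.exp (-α * z)))) := by
  classical
  obtain ⟨C, hC⟩ := hg_bdd
  have hC0 : 0 ≤ C := le_trans (abs_nonneg (g 0)) (hC 0)
  -- the elementary iff's about the limiting tail
  have hiff : ∀ s : ℝ, 0 < s → ∀ y : ℝ,
      (s < Real.exp (α * φ) * Real.exp (-α * y) ↔ y < φ - Real.log s / α) := by
    intro s hs0 y
    rw [← Real.exp_add, show α * φ + -α * y = α * φ - α * y from by ring,
      ← Real.log_lt_iff_lt_exp hs0]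
    have hαq : α * (φ - Real.log s / α) = α * φ - Real.log s := by field_simp
    constructor
    · intro h
      have h2 : α * y < α * (φ - Real.log s / α) := by rw [hαq]; linarith
      exact (mul_lt_mul_iff_right₀ hα).1 h2
    · intro h
      have h2 := (mul_lt_mul_iff_right₀ hα).2 h
      rw [hαq] at h2; linarith
  have hiff2 : ∀ s : ℝ, 0 < s → ∀ y : ℝ,
      (Real.exp (α * φ) * Real.exp (-α * y) < s ↔ φ - Real.log s / α < y) := by
    intro s hs0 y
    rw [← Real.exp_add, show α * φ + -α * y = α * φ - α * y from by ring,
      ← Real.lt_log_iff_exp_lt hs0]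
    have hαq : α * (φ - Real.log s / α) = α * φ - Real.log s := by field_simp
    constructor
    · intro h
      have h2 : α * (φ - Real.log s / α) < α * y := by rw [hαq]; linarith
      exact (mul_lt_mul_iff_right₀ hα).1 h2
    · intro h
      have h2 := (mul_lt_mul_iff_right₀ hα).2 h
      rw [hαq] at h2; linarith
  -- the limiting measure
  set lam : Measure ℝ :=
    volume.withDensity (fun z => ENNReal.ofReal (Real.exp (α * φ) * (α * Real.exp (-α * z))))
    with hlamdef
  have hIntD : ∀ y : ℝ,
      IntegrableOn (fun z => Real.exp (α * φ) * (α * Real.exp (-α * z))) (Ioi y) := by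
    intro y
    have h := (exp_neg_integrableOn_Ioi y hα).const_mul (Real.exp (α * φ) * α)
    exact h.congr (Filter.Eventually.of_forall fun z => by ring)
  have hIoiInt : ∀ y : ℝ, (∫ z in Ioi y, Real.exp (α * φ) * (α * Real.exp (-α * z)))
      = Real.exp (α * φ) * Real.exp (-α * y) := by
    intro y
    have hderiv : ∀ z ∈ Ici y, HasDerivAt (fun w => -(Real.exp (α * φ) * Real.exp (-α * w)))
        (Real.exp (α * φ) * (α * Real.exp (-α * z))) z := by
      intro z _
      have h1 : HasDerivAt (fun w : ℝ => -α * w) (-α) z := by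
        simpa using (hasDerivAt_id z).const_mul (-α)
      have h2 := (h1.exp.const_mul (Real.exp (α * φ))).neg
      exact h2.congr_deriv (by ring)
    have htd : Tendsto (fun w : ℝ => -(Real.exp (α * φ) * Real.exp (-α * w))) atTop (𝓝 0) := by
      have h3 : Tendsto (fun w : ℝ => α * w) atTop atTop :=
        Tendsto.const_mul_atTop hα tendsto_id
      have h4 : Tendsto (fun w : ℝ => Real.exp (-α * w)) atTop (𝓝 0) := by
        have := Real.tendsto_exp_atBot.comp (tendsto_neg_atTop_atBot.comp h3)
        refine this.congr fun w => by simp [Function.comp, neg_mul]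
      have := (h4.const_mul (Real.exp (α * φ))).neg
      simpa using this
    have := integral_Ioi_of_hasDerivAt_of_tendsto' hderiv (hIntD y) htd
    rw [this]; ring
  have hlamIoi : ∀ y : ℝ, lam (Ioi y)
      = ENNReal.ofReal (Real.exp (α * φ) * Real.exp (-α * y)) := by
    intro y
    rw [hlamdef, withDensity_apply _ measurableSet_Ioi,
      ← ofReal_integral_eq_lintegral_ofReal (hIntD y)
        (Filter.Eventually.of_forall fun z => by positivity), hIoiInt y]
  have hlamT : ∀ y : ℝ, (lam (Ioi y)).toReal = Real.exp (α * φ) * Real.exp (-α * y) := by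
    intro y
    rw [hlamIoi y, ENNReal.toReal_ofReal (by positivity)]
  have hlamfin : lam (Ioi (-x)) ≠ ⊤ := by rw [hlamIoi]; exact ENNReal.ofReal_ne_top
  have hlamTx : (lam (Ioi (-x))).toReal = Real.exp (α * φ) * Real.exp (α * x) := by
    rw [hlamT, neg_mul_neg]
  have hmpos : 0 < Real.exp (α * φ) * Real.exp (α * x) := by positivity
  -- the explicit form of the limiting quantile function
  have hqgt : ∀ s : ℝ, s ∈ Ioo (0:ℝ) (Real.exp (α * φ) * Real.exp (α * x)) →
      -x < φ - Real.log s / α := by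
    intro s hs
    have := (hiff s hs.1 (-x)).1 (by rw [neg_mul_neg]; exact hs.2)
    exact this
  have hQlam : ∀ s ∈ Ioo (0:ℝ) (Real.exp (α * φ) * Real.exp (α * x)),
      qinv lam (-x) s = φ - Real.log s / α := by
    intro s hs
    have hs0 : 0 < s := hs.1
    have hq : -x < φ - Real.log s / α := hqgt s hs
    have hset : {y | -x ≤ y ∧ s < (lam (Ioi y)).toReal} = Ico (-x) (φ - Real.log s / α) := by
      ext y
      simp only [mem_setOf_eq, mem_Ico]
      constructor
      · rintro ⟨h1, h2⟩
        rw [hlamT y] at h2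
        exact ⟨h1, (hiff s hs0 y).1 h2⟩
      · rintro ⟨h1, h2⟩
        exact ⟨h1, by rw [hlamT y]; exact (hiff s hs0 y).2 h2⟩
    rw [qinv, hset, insert_eq_self.2 (left_mem_Ico.2 hq)]
    exact (isLUB_Ico hq).csSup_eq (nonempty_Ico.2 hq)
  -- identification of the limit value
  have hRHS : Real.exp (α * φ) * (∫ z in Set.Ioi (-x), g z * (α * Real.exp (-α * z)))
      = ∫ s in Ioo (0:ℝ) (Real.exp (α * φ) * Real.exp (α * x)), g (qinv lam (-x) s) := by
    have h1 : ∫ z in Ioi (-x), g z ∂lam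
        = ∫ s in Ioo (0:ℝ) (Real.exp (α * φ) * Real.exp (α * x)), g (qinv lam (-x) s) := by
      have h := setIntegral_qinv hlamfin hg_meas
      rwa [hlamTx] at h
    rw [← h1, hlamdef]
    have h2 : ∫ z in Ioi (-x), g z
          ∂(volume.withDensity fun z => ENNReal.ofReal (Real.exp (α * φ) * (α * Real.exp (-α * z))))
        = ∫ z in Ioi (-x), (Real.exp (α * φ) * (α * Real.exp (-α * z))) * g z := by
      rw [show (∫ z in Ioi (-x), g z
            ∂(volume.withDensity fun z => ENNReal.ofReal (Real.exp (α * φ) * (α * Real.exp (-α * z)))))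
          = ∫ z, g z ∂((volume.withDensity fun z =>
              ENNReal.ofReal (Real.exp (α * φ) * (α * Real.exp (-α * z)))).restrict (Ioi (-x)))
          from rfl,
        restrict_withDensity measurableSet_Ioi]
      have hmeas : Measurable fun z : ℝ => (Real.exp (α * φ) * (α * Real.exp (-α * z))).toNNReal := by
        apply Measurable.real_toNNReal
        fun_prop
      have h3 := integral_withDensity_eq_integral_smul hmeas g
        (μ := volume.restrict (Ioi (-x)))
      rw [show (fun z : ℝ => ENNReal.ofReal (Real.exp (α * φ) * (α * Real.exp (-α * z))))
          = fun z : ℝ => ((Real.exp (α * φ) * (α * Real.exp (-α * z))).toNNReal : ℝ≥0∞) from rfl,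
        h3]
      refine integral_congr_ae (Filter.Eventually.of_forall fun z => ?_)
      simp only [NNReal.smul_def, smul_eq_mul]
      rw [Real.coe_toNNReal _ (by positivity)]
    rw [h2, ← integral_const_mul]
    refine integral_congr_ae (Filter.Eventually.of_forall fun z => ?_)
    ring
  -- the rescaled shifted measures
  set Mu : ℝ → Measure ℝ :=
    fun u => (ν (Ioi u))⁻¹ • Measure.map (fun ξ => ξ - (u - φ)) ν with hMudef
  have hEv : ∀ᶠ u in atTop, 0 < mtail ν u ∧ φ + x < u ∧ 0 < u := by
    have h0 := hconv 0
    simp only [add_zero, mul_zero, neg_zero, Real.exp_zero] at h0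
    have h1 : ∀ᶠ u in atTop, (1:ℝ)/2 < mtail ν u / mtail ν u :=
      h0.eventually_const_lt (by norm_num)
    refine ((h1.mono ?_).and ((eventually_gt_atTop (φ + x)).and (eventually_gt_atTop 0)))
    intro u hu
    rcases lt_or_ge 0 (mtail ν u) with h | h
    · exact h
    · have : mtail ν u = 0 := le_antisymm h ENNReal.toReal_nonneg
      rw [this, div_zero] at hu
      norm_num at hu
  -- basic facts about `Mu u` for good `u`
  have hfacts : ∀ u : ℝ, 0 < mtail ν u → φ + x < u → 0 < u →
      (∀ y : ℝ, (Mu u (Ioi y)).toReal = mtail ν (y + (u - φ)) / mtail ν u)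
        ∧ Mu u (Ioi (-x)) ≠ ⊤ := by
    intro u h1 h2 h3
    have hν0 : ν (Ioi u) ≠ 0 := by
      intro hc
      rw [mtail, hc] at h1
      simp at h1
    have hMuIoi : ∀ y : ℝ, Mu u (Ioi y) = (ν (Ioi u))⁻¹ * ν (Ioi (y + (u - φ))) := by
      intro y
      rw [hMudef]
      simp only [Measure.smul_apply, smul_eq_mul]
      rw [Measure.map_apply (measurable_sub_const (u - φ)) measurableSet_Ioi]
      congr 2
      ext ξ
      simp [mem_Ioi, lt_sub_iff_add_lt]
    constructor
    · intro y
      rw [hMuIoi y, ENNReal.toReal_mul, ENNReal.toReal_inv, inv_mul_eq_div]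
      rfl
    · rw [hMuIoi (-x)]
      exact ENNReal.mul_ne_top (ENNReal.inv_ne_top.2 hν0) (hfin _ (by linarith)).ne
  -- convergence of the rescaled tails
  have claimA : ∀ y : ℝ, Tendsto (fun u => mtail ν (y + (u - φ)) / mtail ν u) atTop
      (𝓝 (Real.exp (α * φ) * Real.exp (-α * y))) := by
    intro y
    have h := hconv (y - φ)
    have hval : Real.exp (-α * (y - φ)) = Real.exp (α * φ) * Real.exp (-α * y) := by
      rw [← Real.exp_add]; ring_nf
    rw [hval] at h
    exact h.congr fun u => by rw [show u + (y - φ) = y + (u - φ) from by ring]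
  have hclaimx : Tendsto (fun u => mtail ν (-x + (u - φ)) / mtail ν u) atTop
      (𝓝 (Real.exp (α * φ) * Real.exp (α * x))) := by
    have := claimA (-x)
    rwa [neg_mul_neg] at this
  -- the approximating integrands
  set F : ℝ → ℝ → ℝ := fun u =>
    (Ioo (0:ℝ) ((Mu u (Ioi (-x))).toReal)).indicator (fun s => g (qinv (Mu u) (-x) s))
    with hFdef
  set Flim : ℝ → ℝ :=
    (Ioo (0:ℝ) (Real.exp (α * φ) * Real.exp (α * x))).indicator
      (fun s => g (qinv lam (-x) s)) with hFlimdef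
  -- the left-hand side eventually equals the integral of `F u`
  have hLHSeq : ∀ᶠ u in atTop,
      (∫ ξ in {ξ : ℝ | -x < ξ - (u - φ)}, g (ξ - (u - φ)) ∂ν) / mtail ν u
        = ∫ s, F u s := by
    filter_upwards [hEv] with u hu
    obtain ⟨hTeq, hMufin⟩ := hfacts u hu.1 hu.2.1 hu.2.2
    have hmap : ∫ ξ in {ξ : ℝ | -x < ξ - (u - φ)}, g (ξ - (u - φ)) ∂ν
        = ∫ z in Ioi (-x), g z ∂(Measure.map (fun ξ => ξ - (u - φ)) ν) := by
      rw [setIntegral_map measurableSet_Ioi hg_meas.aestronglyMeasurable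
        (measurable_sub_const (u - φ)).aemeasurable]
      rfl
    have hsm : ∫ z in Ioi (-x), g z ∂(Mu u)
        = (mtail ν u)⁻¹ * ∫ z in Ioi (-x), g z ∂(Measure.map (fun ξ => ξ - (u - φ)) ν) := by
      simp only [hMudef]
      rw [Measure.restrict_smul, integral_smul_measure, ENNReal.toReal_inv, smul_eq_mul]
      rfl
    rw [hmap, div_eq_inv_mul, ← hsm, setIntegral_qinv hMufin hg_meas,
      ← integral_indicator measurableSet_Ioo]
  -- pieces for dominated convergence: a.e. convergence of the integrands
  have hlammap : Measure.map (qinv lam (-x))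
      (volume.restrict (Ioo 0 (Real.exp (α * φ) * Real.exp (α * x)))) = lam.restrict (Ioi (-x)) := by
    have h := map_qinv hlamfin
    rw [hlamTx] at h
    exact h.symm
  have hcont' : ∀ᵐ z ∂(lam.restrict (Ioi (-x))), ContinuousAt g z := by
    have habs : lam.restrict (Ioi (-x)) ≪ volume.restrict (Ioi (-x)) := by
      rw [hlamdef]
      exact (withDensity_absolutelyContinuous volume _).restrict _
    exact habs.ae_le hg_cont
  have hcontQ : ∀ᵐ s ∂(volume : Measure ℝ),
      s ∈ Ioo (0:ℝ) (Real.exp (α * φ) * Real.exp (α * x)) →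
        ContinuousAt g (qinv lam (-x) s) := by
    refine ae_imp_of_ae_restrict (ae_of_ae_map (qinv_aemeasurable hlamfin _) ?_)
    rw [hlammap]
    exact hcont'
  have hne : ∀ᵐ s ∂(volume : Measure ℝ), s ≠ Real.exp (α * φ) * Real.exp (α * x) := by
    rw [ae_iff]
    have : {s : ℝ | ¬ s ≠ Real.exp (α * φ) * Real.exp (α * x)}
        = {Real.exp (α * φ) * Real.exp (α * x)} := by
      ext s; simp [not_not]
    rw [this]
    exact Real.volume_singleton
  have hlim : ∀ᵐ s ∂(volume : Measure ℝ),
      Tendsto (fun u => F u s) atTop (𝓝 (Flim s)) := by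
    filter_upwards [hcontQ, hne] with s hs1 hs2
    by_cases hsm : s ∈ Ioo (0:ℝ) (Real.exp (α * φ) * Real.exp (α * x))
    · have hs0 : 0 < s := hsm.1
      have hgc : ContinuousAt g (qinv lam (-x) s) := hs1 hsm
      have hq : qinv lam (-x) s = φ - Real.log s / α := hQlam s hsm
      have hxq : -x < φ - Real.log s / α := hqgt s hsm
      -- convergence of the quantiles
      have hQu : Tendsto (fun u => qinv (Mu u) (-x) s) atTop (𝓝 (φ - Real.log s / α)) := by
        rw [tendsto_order]
        constructor
        · intro b hb
          have h1 : max b (-x) < φ - Real.log s / α := max_lt hb hxq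
          set y' := (max b (-x) + (φ - Real.log s / α)) / 2 with hy'def
          have hy1 : -x ≤ y' := by
            have := le_max_right b (-x)
            rw [hy'def]; linarith
          have hy2 : y' < φ - Real.log s / α := by rw [hy'def]; linarith
          have hy3 : b ≤ y' := by
            have := le_max_left b (-x)
            rw [hy'def]; linarith
          have hS : s < Real.exp (α * φ) * Real.exp (-α * y') := (hiff s hs0 y').2 hy2
          filter_upwards [hEv, (claimA y').eventually_const_lt hS] with u hu hTu
          obtain ⟨hTeq, hMufin⟩ := hfacts u hu.1 hu.2.1 hu.2.2
          have hlt : s < (Mu u (Ioi y')).toReal := by rw [hTeq y']; exact hTu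
          have := (lt_qinv_iff hMufin hy1 hs0).2 hlt
          -- y' < qinv, and b ≤ y'
          exact lt_of_le_of_lt hy3 this
        · intro b hb
          set y' := ((φ - Real.log s / α) + b) / 2 with hy'def
          have hqy : φ - Real.log s / α < y' := by rw [hy'def]; linarith
          have hy1 : -x ≤ y' := (lt_trans hxq hqy).le
          have hy2 : y' < b := by rw [hy'def]; linarith
          have hS : Real.exp (α * φ) * Real.exp (-α * y') < s := (hiff2 s hs0 y').2 hqy
          filter_upwards [hEv, (claimA y').eventually_lt_const hS] with u hu hTu
          obtain ⟨hTeq, hMufin⟩ := hfacts u hu.1 hu.2.1 hu.2.2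
          have hle : qinv (Mu u) (-x) s ≤ y' := by
            by_contra hcon
            push_neg at hcon
            have := (lt_qinv_iff hMufin hy1 hs0).1 hcon
            rw [hTeq y'] at this
            linarith
          exact lt_of_le_of_lt hle hy2
      have hEvmem : ∀ᶠ u in atTop, F u s = g (qinv (Mu u) (-x) s) := by
        filter_upwards [hEv, hclaimx.eventually_const_lt hsm.2] with u hu hT
        obtain ⟨hTeq, _⟩ := hfacts u hu.1 hu.2.1 hu.2.2
        simp only [hFdef]
        exact indicator_of_mem (mem_Ioo.2 ⟨hs0, by rw [hTeq (-x)]; exact hT⟩) _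
      have hFlims : Flim s = g (qinv lam (-x) s) := indicator_of_mem hsm _
      rw [hFlims, ← hq] at *
      refine Tendsto.congr' (hEvmem.mono fun u hu => hu.symm) ?_
      rw [hq]
      exact (hgc.tendsto.comp (hq ▸ hQu))
    · have hFlims : Flim s = 0 := indicator_of_notMem hsm _
      rw [hFlims]
      rcases le_or_gt s 0 with hs0 | hs0
      · have hz : ∀ u, F u s = 0 := fun u =>
          indicator_of_notMem (fun hc => absurd hc.1 (not_lt.2 hs0)) _
        simp only [hz]
        exact tendsto_const_nhds
      · have hsge : Real.exp (α * φ) * Real.exp (α * x) < s := by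
          rcases lt_trichotomy s (Real.exp (α * φ) * Real.exp (α * x)) with h | h | h
          · exact absurd ⟨hs0, h⟩ hsm
          · exact absurd h hs2
          · exact h
        have hz : ∀ᶠ u in atTop, F u s = 0 := by
          filter_upwards [hEv, hclaimx.eventually_lt_const hsge] with u hu hT
          obtain ⟨hTeq, _⟩ := hfacts u hu.1 hu.2.1 hu.2.2
          refine indicator_of_notMem (fun hc => ?_) _
          rw [hTeq (-x)] at hc
          exact absurd hc.2 (not_lt.2 hT.le)
        exact tendsto_const_nhds.congr' (hz.mono fun u hu => hu.symm)
  -- dominated convergence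
  have hDCT : Tendsto (fun u => ∫ s, F u s) atTop (𝓝 (∫ s, Flim s)) := by
    refine tendsto_integral_filter_of_dominated_convergence
      ((Ioo (0:ℝ) (Real.exp (α * φ) * Real.exp (α * x) + 1)).indicator fun _ => C)
      ?_ ?_ ?_ hlim
    · filter_upwards [hEv] with u hu
      obtain ⟨hTeq, hMufin⟩ := hfacts u hu.1 hu.2.1 hu.2.2
      simp only [hFdef]
      rw [aestronglyMeasurable_indicator_iff measurableSet_Ioo]
      exact (hg_meas.comp_aemeasurable (qinv_aemeasurable hMufin _)).aestronglyMeasurable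
    · filter_upwards [hEv, hclaimx.eventually_lt_const
        (show Real.exp (α * φ) * Real.exp (α * x) < Real.exp (α * φ) * Real.exp (α * x) + 1
          by linarith)] with u hu hub
      obtain ⟨hTeq, hMufin⟩ := hfacts u hu.1 hu.2.1 hu.2.2
      refine Filter.Eventually.of_forall fun s => ?_
      by_cases hsmem : s ∈ Ioo (0:ℝ) ((Mu u (Ioi (-x))).toReal)
      · simp only [hFdef]
        rw [indicator_of_mem hsmem]
        have hs' : s ∈ Ioo (0:ℝ) (Real.exp (α * φ) * Real.exp (α * x) + 1) := by
          refine ⟨hsmem.1, ?_⟩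
          have := hsmem.2
          rw [hTeq (-x)] at this
          linarith
        rw [indicator_of_mem hs']
        rw [Real.norm_eq_abs]
        exact hC _
      · simp only [hFdef]
        rw [indicator_of_notMem hsmem, norm_zero]
        exact indicator_apply_nonneg fun _ => hC0
    · rw [integrable_indicator_iff measurableSet_Ioo]
      exact integrableOn_const measure_Ioo_lt_top.ne
  -- conclusion
  have hFlimint : ∫ s, Flim s
      = Real.exp (α * φ) * ∫ z in Set.Ioi (-x), g z * (α * Real.exp (-α * z)) := by
    rw [hFlimdef, integral_indicator measurableSet_Ioo, ← hRHS]
  rw [← hFlimint]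
  exact Tendsto.congr' (hLHSeq.mono fun u hu => hu.symm) hDCT


end GriffinMaller
end
end
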